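/- arXiv:2305.19605 — 3 statements merged into one kernel-verified Lean document; each statement's English description precedes it below -/
import Mathlib

section
/- Let (X_s)_{s≥1} be a martingale difference sequence with respect to a filtration (F_s)_{s≥0} (i.e., X_s is F_s-measurable and E[X_s | F_{s−1}] = 0) with |X_s| ≤ K almost surely for all s, and let 𝔖_t² = Σ_{τ=1}^t E[X_τ² | F_{τ−1}]. Then for all δ ∈ (0,1) and all integers T ≥ 1, with probability at least 1 − δ: max_{t ≤ T} Σ_{τ=1}^t X_τ ≤ 2·𝔖_T·√( ln( log₂(2T)/δ ) ) + 3·K·ln( log₂(2T)/δ ). -/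
open MeasureTheory
open scoped ENNReal
section S1

lemma exp_cubic {y : ℝ} (hy : |y| ≤ 1) :
    Real.exp y ≤ 1 + y + y^2/2 + (2/9)*|y|^3 := by
  have h := Real.exp_bound hy (n := 3) (by norm_num)
  have h3 : ∑ m ∈ Finset.range 3, y ^ m / (m.factorial : ℝ) = 1 + y + y^2/2 := by
    norm_num [Finset.sum_range_succ, Nat.factorial]
  rw [h3] at h
  have := abs_le.1 h
  have h4 : ((3:ℕ).succ : ℝ) / ((3:ℕ).factorial * (3:ℕ)) = 2/9 := by norm_num [Nat.factorial]
  nlinarith [this.2, abs_nonneg y]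

lemma mgf_poly {l x K : ℝ} (hK : 0 < K) (hl : 0 ≤ l) (hlK : l * K ≤ 1) (hx : |x| ≤ K) :
    Real.exp (l * x) ≤ 1 + l * x + (l^2/2 + (2/9)*l^3*K) * x^2 := by
  have hy : |l * x| ≤ 1 := by
    rw [abs_mul, abs_of_nonneg hl]
    calc l * |x| ≤ l * K := by nlinarith [abs_nonneg x]
    _ ≤ 1 := hlK
  have h := exp_cubic hy
  have hcube : |l*x|^3 ≤ l^3 * K * x^2 := by
    rw [abs_mul, abs_of_nonneg hl]
    have h1 : |x|^3 ≤ K * x^2 := by nlinarith [abs_nonneg x, sq_abs x, sq_nonneg x]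
    calc (l*|x|)^3 = l^3 * |x|^3 := by ring
    _ ≤ l^3 * (K * x^2) := by nlinarith [abs_nonneg x, pow_nonneg hl 3]
    _ = l^3 * K * x^2 := by ring
  nlinarith [h, hcube]

lemma level_bottom {c K S : ℝ} (hc : 0 < c) (hK : 0 < K) (hS : 0 ≤ S)
    (hSb : S ≤ 8*c*K^2) :
    c ≤ (1/K)*(2*Real.sqrt (S*c) + 3*K*c) - ((13/18)/K^2)*S := by
  set s := Real.sqrt (S*c) with hs
  have hs0 : 0 ≤ s := Real.sqrt_nonneg _
  have hs2 : s^2 = S*c := Real.sq_sqrt (by positivity)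
  have hsle : s ≤ 3*K*c := by
    rw [hs, show 3*K*c = Real.sqrt ((3*K*c)^2) from (Real.sqrt_sq (by positivity)).symm]
    apply Real.sqrt_le_sqrt; nlinarith
  have key : 13*S ≤ 36*K*s + 36*K^2*c := by nlinarith
  have h2 : ((13/18)/K^2)*S ≤ 2*s/K + 2*c := by
    rw [div_mul_eq_mul_div, div_le_iff₀ (by positivity)]
    have : 2*s/K*K^2 = 2*s*K := by field_simp
    rw [add_mul, this]
    nlinarith
  have h3 : (1/K)*(2*s + 3*K*c) = 2*s/K + 3*c := by field_simp
  rw [h3]; linarith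

lemma level_mid {c K S b : ℝ} (hc : 0 < c) (hK : 0 < K) (hb : 0 < b)
    (hbc : 2*c*K^2 ≤ b) (hbS : b ≤ 2*S) (hSb : S ≤ b) :
    c ≤ Real.sqrt (2*c/b) * (2*Real.sqrt (S*c) + 3*K*c)
        - ((Real.sqrt (2*c/b))^2/2 + (2/9)*(Real.sqrt (2*c/b))^3*K) * b := by
  set l := Real.sqrt (2*c/b) with hl
  have hl0 : 0 ≤ l := Real.sqrt_nonneg _
  have hl2 : l^2 = 2*c/b := Real.sq_sqrt (by positivity)
  have hl2b : l^2 * b = 2*c := by rw [hl2]; field_simp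
  have hlK : l*K ≤ 1 := by
    have h1 : (l*K)^2 ≤ 1 := by
      have : l^2*K^2 ≤ 1 := by rw [hl2, div_mul_eq_mul_div, div_le_one hb]; linarith
      calc (l*K)^2 = l^2*K^2 := by ring
      _ ≤ 1 := this
    nlinarith [mul_nonneg hl0 hK.le]
  have hmain : 2*c ≤ l * (2*Real.sqrt (S*c)) := by
    have h1 : Real.sqrt (2*c/b) * Real.sqrt (S*c) = Real.sqrt ((2*c/b)*(S*c)) :=
      (Real.sqrt_mul (by positivity) _).symm
    have h2 : c^2 ≤ (2*c/b)*(S*c) := by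
      rw [div_mul_eq_mul_div, le_div_iff₀ hb]
      nlinarith
    have h3 : c ≤ Real.sqrt ((2*c/b)*(S*c)) := by
      conv_lhs => rw [show c = Real.sqrt (c^2) from (Real.sqrt_sq hc.le).symm]
      exact Real.sqrt_le_sqrt h2
    calc 2*c ≤ 2 * (Real.sqrt (2*c/b) * Real.sqrt (S*c)) := by rw [h1]; linarith
    _ = l * (2*Real.sqrt (S*c)) := by rw [hl]; ring
  have hgb : (l^2/2 + (2/9)*l^3*K) * b = c + (4/9)*(l*K)*c := by
    have : l^3 * b = l * (2*c) := by
      calc l^3*b = l*(l^2*b) := by ring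
      _ = l*(2*c) := by rw [hl2b]
    calc (l^2/2 + (2/9)*l^3*K) * b = (l^2*b)/2 + (2/9)*(l^3*b)*K := by ring
    _ = (2*c)/2 + (2/9)*(l*(2*c))*K := by rw [hl2b, this]
    _ = c + (4/9)*(l*K)*c := by ring
  rw [hgb]
  have h5 : 0 ≤ l*K := mul_nonneg hl0 hK.le
  nlinarith

variable {Ω : Type*} {m0 : MeasurableSpace Ω} {μ : Measure Ω} [IsProbabilityMeasure μ]

lemma bdd_int (f : Ω → ℝ) (C : ℝ) (hf : AEStronglyMeasurable f μ)
    (hbdd : ∀ᵐ ω ∂μ, |f ω| ≤ C) : Integrable f μ :=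
  Integrable.mono' (integrable_const C) hf
    (by filter_upwards [hbdd] with ω h using by rwa [Real.norm_eq_abs])

lemma ville (ℱ : Filtration ℕ m0)
    (X : ℕ → Ω → ℝ) {K : ℝ} (hK : 0 < K)
    (hadapted : ∀ s, 1 ≤ s → StronglyMeasurable[ℱ s] (X s))
    (hint : ∀ s, 1 ≤ s → Integrable (X s) μ)
    (hmd : ∀ s, 1 ≤ s → μ[X s|ℱ (s - 1)] =ᵐ[μ] 0)
    (hbd : ∀ s, 1 ≤ s → ∀ᵐ ω ∂μ, |X s ω| ≤ K)
    (l g : ℝ) (hl : 0 ≤ l) (hlK : l * K ≤ 1) (hg : g = l^2/2 + (2/9)*l^3*K)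
    (c : ℝ) (T : ℕ) :
    μ {ω | ∃ t, 1 ≤ t ∧ t ≤ T ∧
        c ≤ l * (∑ τ ∈ Finset.Icc 1 t, X τ ω)
            - g * (∑ τ ∈ Finset.Icc 1 t, (μ[(X τ)^2|ℱ (τ-1)]) ω)}
      ≤ ENNReal.ofReal (Real.exp (-c)) := by
  have hg0 : 0 ≤ g := by
    rw [hg]; positivity
  set σ2 : ℕ → Ω → ℝ := fun τ => μ[(X τ)^2|ℱ (τ-1)] with hσ2
  set M : ℕ → Ω → ℝ := fun t ω => ∑ τ ∈ Finset.Icc 1 t, X τ ω with hM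
  set V : ℕ → Ω → ℝ := fun t ω => ∑ τ ∈ Finset.Icc 1 t, σ2 τ ω with hV
  set Z : ℕ → Ω → ℝ := fun t ω => Real.exp (l * M t ω - g * V t ω) with hZ
  -- basic measurability / integrability
  have hXsm : ∀ s, 1 ≤ s → StronglyMeasurable (X s) :=
    fun s hs => (hadapted s hs).mono (ℱ.le s)
  have hX2int : ∀ s, 1 ≤ s → Integrable (fun ω => (X s ω)^2) μ := by
    intro s hs
    refine bdd_int _ (K^2) ((hXsm s hs).pow 2).aestronglyMeasurable ?_
    filter_upwards [hbd s hs] with ω h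
    rw [abs_pow]; exact pow_le_pow_left₀ (abs_nonneg _) h 2
  have hσ2nn : ∀ s, 0 ≤ᵐ[μ] σ2 s :=
    fun s => condExp_nonneg (Filter.Eventually.of_forall fun ω => sq_nonneg _)
  have hMadp : ∀ t, StronglyMeasurable[ℱ t] (M t) := by
    intro t
    apply Finset.stronglyMeasurable_fun_sum
    intro τ hτ
    rw [Finset.mem_Icc] at hτ
    exact (hadapted τ hτ.1).mono (ℱ.mono hτ.2)
  have hVadp : ∀ t, StronglyMeasurable[ℱ t] (V t) := by
    intro t
    apply Finset.stronglyMeasurable_fun_sum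
    intro τ hτ
    rw [Finset.mem_Icc] at hτ
    exact stronglyMeasurable_condExp.mono (ℱ.mono (le_trans (Nat.sub_le τ 1) hτ.2))
  have hZadp : ∀ t, StronglyMeasurable[ℱ t] (Z t) := by
    intro t
    exact (Real.continuous_exp.comp_stronglyMeasurable
      (((hMadp t).const_mul l).sub ((hVadp t).const_mul g)))
  have hMbd : ∀ t, ∀ᵐ ω ∂μ, |M t ω| ≤ K * t := by
    intro t
    have := ae_all_iff.2 (fun τ : Finset.Icc 1 t => hbd τ.1 (Finset.mem_Icc.1 τ.2).1)
    filter_upwards [this] with ω h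
    calc |M t ω| ≤ ∑ τ ∈ Finset.Icc 1 t, |X τ ω| := Finset.abs_sum_le_sum_abs _ _
    _ ≤ ∑ τ ∈ Finset.Icc 1 t, K := Finset.sum_le_sum (fun τ hτ => h ⟨τ, hτ⟩)
    _ ≤ K * t := by
        rw [Finset.sum_const, nsmul_eq_mul]
        have : (Finset.Icc 1 t).card ≤ t := by simp [Nat.card_Icc]
        nlinarith [hK.le, (Nat.cast_le (α := ℝ)).2 this, Nat.cast_nonneg (α := ℝ) t]
  have hZbd : ∀ t, ∀ᵐ ω ∂μ, |Z t ω| ≤ Real.exp (l * (K * t)) := by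
    intro t
    filter_upwards [hMbd t, ae_all_iff.2 (fun τ : Finset.Icc 1 t => hσ2nn τ.1)] with ω h1 h2
    rw [hZ, abs_of_pos (Real.exp_pos _), Real.exp_le_exp]
    have hV0 : 0 ≤ V t ω := Finset.sum_nonneg (fun τ hτ => h2 ⟨τ, hτ⟩)
    have : l * M t ω ≤ l * (K * t) := by
      have := (abs_le.1 h1).2
      nlinarith
    nlinarith
  have hZint : ∀ t, Integrable (Z t) μ := by
    intro t
    exact bdd_int _ _ (((hZadp t).mono (ℱ.le t)).aestronglyMeasurable) (hZbd t)
  -- supermartingale step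
  have hstep : ∀ t : ℕ, μ[Z (t+1)|ℱ t] ≤ᵐ[μ] Z t := by
    intro t
    have ht1 : 1 ≤ t + 1 := Nat.le_add_left 1 t
    have hsub : t + 1 - 1 = t := rfl
    set A : Ω → ℝ := fun ω => Real.exp (l * M t ω - g * V (t+1) ω) with hA
    set E : Ω → ℝ := fun ω => Real.exp (l * X (t+1) ω) with hE
    have hMsucc : ∀ ω, M (t+1) ω = M t ω + X (t+1) ω := by
      intro ω; rw [hM]; simp only
      rw [Finset.sum_Icc_succ_top ht1]
    have hVsucc : ∀ ω, V (t+1) ω = V t ω + σ2 (t+1) ω := by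
      intro ω; rw [hV]; simp only
      rw [Finset.sum_Icc_succ_top ht1]
    have hZsplit : Z (t+1) = A * E := by
      funext ω
      rw [hZ, hA, hE]; simp only [Pi.mul_apply]
      rw [← Real.exp_add, hMsucc ω]
      ring_nf
    have hAsm : StronglyMeasurable[ℱ t] A := by
      apply Real.continuous_exp.comp_stronglyMeasurable
      refine ((hMadp t).const_mul l).sub (StronglyMeasurable.const_mul ?_ g)
      apply Finset.stronglyMeasurable_fun_sum
      intro τ hτ
      rw [Finset.mem_Icc] at hτ
      refine stronglyMeasurable_condExp.mono (ℱ.mono ?_)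
      exact Nat.sub_le_iff_le_add.2 hτ.2
    have hEbd : ∀ᵐ ω ∂μ, |E ω| ≤ Real.exp (l * K) := by
      filter_upwards [hbd (t+1) ht1] with ω h
      rw [hE]; simp only
      rw [abs_of_pos (Real.exp_pos _), Real.exp_le_exp]
      nlinarith [(abs_le.1 h).2]
    have hEsm : StronglyMeasurable E :=
      Real.continuous_exp.comp_stronglyMeasurable ((hXsm (t+1) ht1).const_mul l)
    have hEint : Integrable E μ := bdd_int _ _ hEsm.aestronglyMeasurable hEbd
    have hAEint : Integrable (A * E) μ := by rw [← hZsplit]; exact hZint (t+1)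
    have hmul : μ[A * E|ℱ t] =ᵐ[μ] A * μ[E|ℱ t] :=
      condExp_mul_of_stronglyMeasurable_left hAsm hAEint hEint
    set X2 : Ω → ℝ := fun ω => (X (t+1) ω)^2 with hX2d
    set P : Ω → ℝ := (fun _ => (1:ℝ)) + (l • X (t+1) + g • X2) with hP
    have hX2i : Integrable X2 μ := hX2int (t+1) ht1
    have hPint : Integrable P μ := by
      refine (integrable_const 1).add (((hint (t+1) ht1).smul l).add (hX2i.smul g))
    have hEleP : E ≤ᵐ[μ] P := by
      filter_upwards [hbd (t+1) ht1] with ω h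
      have := mgf_poly hK hl hlK h
      rw [hE, hP]; simp only [Pi.add_apply, Pi.smul_apply, smul_eq_mul]
      rw [hg]
      have hx2 : X2 ω = X (t+1) ω ^ 2 := rfl
      rw [hx2]
      linarith [this]
    have hcondEP : μ[E|ℱ t] ≤ᵐ[μ] μ[P|ℱ t] := condExp_mono hEint hPint hEleP
    have hPcal : μ[P|ℱ t] =ᵐ[μ] fun ω => 1 + g * σ2 (t+1) ω := by
      have e1 : μ[P|ℱ t] =ᵐ[μ] μ[(fun _ => (1:ℝ))|ℱ t] + μ[l • X (t+1) + g • X2|ℱ t] :=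
        condExp_add (integrable_const 1) (((hint (t+1) ht1).smul l).add (hX2i.smul g)) _
      have e2 : μ[l • X (t+1) + g • X2|ℱ t] =ᵐ[μ] μ[l • X (t+1)|ℱ t] + μ[g • X2|ℱ t] :=
        condExp_add ((hint (t+1) ht1).smul l) (hX2i.smul g) _
      have e3 : μ[l • X (t+1)|ℱ t] =ᵐ[μ] l • μ[X (t+1)|ℱ t] := condExp_smul l (X (t+1)) _
      have e4 : μ[X (t+1)|ℱ t] =ᵐ[μ] 0 := hmd (t+1) ht1
      have e5 : μ[g • X2|ℱ t] =ᵐ[μ] g • μ[X2|ℱ t] := condExp_smul g X2 _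
      have e6 : μ[X2|ℱ t] = σ2 (t+1) := rfl
      have e7 : μ[(fun _ => (1:ℝ))|ℱ t] = fun _ => (1:ℝ) := condExp_const (ℱ.le t) 1
      filter_upwards [e1, e2, e3, e4, e5] with ω h1 h2 h3 h4 h5
      rw [h1]
      simp only [Pi.add_apply, e7]
      rw [h2]
      simp only [Pi.add_apply]
      rw [h3, h5]
      simp only [Pi.smul_apply, smul_eq_mul, h4, ← e6]
      simp
    have hfinal : A * μ[E|ℱ t] ≤ᵐ[μ] Z t := by
      filter_upwards [hcondEP, hPcal, hσ2nn (t+1)] with ω hEP hPc hnn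
      have hA0 : 0 ≤ A ω := (Real.exp_pos _).le
      have hle : (μ[E|ℱ t]) ω ≤ 1 + g * σ2 (t+1) ω := le_trans (hEP) (le_of_eq hPc)
      have h1e : 1 + g * σ2 (t+1) ω ≤ Real.exp (g * σ2 (t+1) ω) := by
        linarith [Real.add_one_le_exp (g * σ2 (t+1) ω)]
      have : A ω * (μ[E|ℱ t]) ω ≤ A ω * Real.exp (g * σ2 (t+1) ω) := by
        apply mul_le_mul_of_nonneg_left _ hA0
        linarith
      refine le_trans this (le_of_eq ?_)
      rw [hA]; simp only
      rw [← Real.exp_add, hZ]; simp only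
      rw [hVsucc ω]
      ring_nf
    calc μ[Z (t+1)|ℱ t] =ᵐ[μ] A * μ[E|ℱ t] := by rw [hZsplit]; exact hmul
    _ ≤ᵐ[μ] Z t := hfinal
  have hZsuper : Supermartingale Z ℱ μ := supermartingale_nat (fun t => hZadp t) hZint hstep
  -- maximal part
  set ε : ℝ := Real.exp c with hε
  have hε0 : 0 < ε := Real.exp_pos c
  set hit : Ω → WithTop ℕ := fun ω => ((MeasureTheory.hittingBtwn Z (Set.Ici ε) 0 T ω : ℕ) : WithTop ℕ) with hhit
  have hstop : IsStoppingTime ℱ hit :=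
    hittingBtwn_isStoppingTime hZsuper.1.adapted measurableSet_Ici
  have hhitle : ∀ ω, hit ω ≤ T := fun ω => WithTop.coe_le_coe.2 (hittingBtwn_le ω)
  have hsvint : Integrable (stoppedValue Z hit) μ :=
    integrable_stoppedValue ℕ hstop hZint hhitle
  have hsv0 : 0 ≤ᵐ[μ] stoppedValue Z hit :=
    Filter.Eventually.of_forall fun ω => (Real.exp_pos _).le
  have hZ0 : Z 0 = fun _ => (1:ℝ) := by
    funext ω
    rw [hZ]; simp only
    rw [hM, hV]; simp only
    rw [Finset.Icc_eq_empty (by norm_num)]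
    simp
  have hEsv : ∫ ω, stoppedValue Z hit ω ∂μ ≤ 1 := by
    have hneg : Submartingale (-Z) ℱ μ := hZsuper.neg
    have h0 : IsStoppingTime ℱ (fun _ : Ω => ((0:ℕ) : WithTop ℕ)) := isStoppingTime_const ℱ 0
    have hmono := hneg.expected_stoppedValue_mono h0 hstop
      (fun ω => WithTop.coe_le_coe.2 (Nat.zero_le _)) hhitle
    have e1 : stoppedValue (-Z) (fun _ : Ω => ((0:ℕ) : WithTop ℕ)) = fun ω => -(1:ℝ) := by
      funext ω
      show -(Z 0 ω) = -1
      rw [hZ0]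
    have e2 : stoppedValue (-Z) hit = fun ω => -(stoppedValue Z hit ω) := rfl
    rw [e1] at hmono
    have e2' : ∀ x, stoppedValue (-Z) hit x = -(stoppedValue Z hit x) := fun x => rfl
    simp only [e2', integral_neg, integral_const, measureReal_def, measure_univ, ENNReal.toReal_one,
      smul_eq_mul, mul_one, one_smul] at hmono
    linarith
  have hincl : {ω | ∃ t, 1 ≤ t ∧ t ≤ T ∧
      c ≤ l * M t ω - g * V t ω} ⊆ {ω | ε ≤ stoppedValue Z hit ω} := by
    rintro ω ⟨t, ht1, htT, hc⟩
    have hmem : ∃ j ∈ Set.Icc 0 T, Z j ω ∈ Set.Ici ε :=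
      ⟨t, ⟨Nat.zero_le _, htT⟩, by
        rw [Set.mem_Ici, hε]
        exact Real.exp_le_exp.2 hc⟩
    exact stoppedValue_hittingBtwn_mem hmem
  have hmark := mul_meas_ge_le_integral_of_nonneg hsv0 hsvint ε
  have htoReal : (μ {x | ε ≤ stoppedValue Z hit x}).toReal ≤ Real.exp (-c) := by
    have h1 : ε * (μ {x | ε ≤ stoppedValue Z hit x}).toReal ≤ 1 := le_trans hmark hEsv
    rw [Real.exp_neg, ← hε, inv_eq_one_div, le_div_iff₀ hε0]
    linarith
  calc μ {ω | ∃ t, 1 ≤ t ∧ t ≤ T ∧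
      c ≤ l * (∑ τ ∈ Finset.Icc 1 t, X τ ω)
          - g * (∑ τ ∈ Finset.Icc 1 t, (μ[(X τ)^2|ℱ (τ-1)]) ω)}
      ≤ μ {x | ε ≤ stoppedValue Z hit x} := measure_mono hincl
  _ = ENNReal.ofReal ((μ {x | ε ≤ stoppedValue Z hit x}).toReal) :=
      (ENNReal.ofReal_toReal (measure_ne_top μ _)).symm
  _ ≤ ENNReal.ofReal (Real.exp (-c)) := ENNReal.ofReal_le_ofReal htoReal

end S1
section S2

variable {Ω : Type*} {m0 : MeasurableSpace Ω} {μ : Measure Ω} [IsProbabilityMeasure μ]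

lemma bdd_int' (f : Ω → ℝ) (C : ℝ) (hf : AEStronglyMeasurable f μ)
    (hbdd : ∀ᵐ ω ∂μ, |f ω| ≤ C) : Integrable f μ :=
  Integrable.mono' (integrable_const C) hf
    (by filter_upwards [hbdd] with ω h using by rwa [Real.norm_eq_abs])

lemma cantelli_arith {S m c : ℝ} (hS : 0 ≤ S) (hm : 0 < m) (hm2 : 4*S*c ≤ m^2) (hc : 0 < c) :
    ((m + S/m)^2)⁻¹ * (S + (S/m)^2) ≤ 1/(1+4*c) := by
  rcases eq_or_lt_of_le hS with h|h
  · rw [← h]; simp; positivity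
  · have key : ((m + S/m)^2)⁻¹ * (S + (S/m)^2) = S/(m^2+S) := by
      rw [inv_mul_eq_div]
      rw [div_eq_div_iff (by positivity) (by positivity)]
      field_simp
    rw [key, div_le_div_iff₀ (by positivity) (by positivity)]
    nlinarith

lemma cantelli (ℱ : Filtration ℕ m0) (Y : Ω → ℝ) {K : ℝ} (hK : 0 < K)
    (hsm : StronglyMeasurable Y) (hintY : Integrable Y μ)
    (hmd1 : μ[Y|ℱ 0] =ᵐ[μ] 0) (hbd1 : ∀ᵐ ω ∂μ, |Y ω| ≤ K)
    {c : ℝ} (hc : 0 < c) (hc1 : c ≤ 1) :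
    μ {ω | 2 * Real.sqrt ((μ[Y^2|ℱ 0]) ω) * Real.sqrt c + 3*K*c < Y ω}
      ≤ ENNReal.ofReal (Real.exp (-c)) := by
  set σ2 : Ω → ℝ := μ[Y^2|ℱ 0] with hσ2
  have hσ2sm : StronglyMeasurable[ℱ 0] σ2 := stronglyMeasurable_condExp
  have hσ2sm0 : StronglyMeasurable σ2 := hσ2sm.mono (ℱ.le 0)
  have hY2 : ∀ ω, (Y^2) ω = Y ω^2 := fun ω => rfl
  have hY2int : Integrable (Y^2) μ := by
    refine bdd_int' _ (K^2) ((hsm.pow 2).aestronglyMeasurable) ?_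
    filter_upwards [hbd1] with ω h
    rw [hY2, abs_pow]
    exact pow_le_pow_left₀ (abs_nonneg _) h 2
  have hσ2nn : 0 ≤ᵐ[μ] σ2 :=
    condExp_nonneg (Filter.Eventually.of_forall fun ω => sq_nonneg (Y ω))
  have hσ2bd : σ2 ≤ᵐ[μ] fun _ => K^2 := by
    have h1 : Y^2 ≤ᵐ[μ] fun _ => K^2 := by
      filter_upwards [hbd1] with ω h
      rw [hY2, ← sq_abs]
      exact pow_le_pow_left₀ (abs_nonneg _) h 2
    have h2 := condExp_mono (m := ℱ 0) hY2int (integrable_const _) h1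
    rwa [condExp_const (ℱ.le 0)] at h2
  set m : Ω → ℝ := fun ω => 2 * Real.sqrt (σ2 ω) * Real.sqrt c + 3*K*c with hm
  have hm0 : ∀ ω, 0 < m ω := fun ω => by
    have h1 : 0 ≤ 2 * Real.sqrt (σ2 ω) * Real.sqrt c := by positivity
    have : 0 < 3*K*c := by positivity
    rw [hm]; dsimp only; linarith
  set v : Ω → ℝ := fun ω => σ2 ω / m ω with hv
  have hmsm : StronglyMeasurable[ℱ 0] m := by
    apply StronglyMeasurable.add_const
    exact ((Real.continuous_sqrt.comp_stronglyMeasurable hσ2sm).const_mul 2).mul_const _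
  have hvsm : StronglyMeasurable[ℱ 0] v :=
    (hσ2sm.measurable.div hmsm.measurable).stronglyMeasurable
  set B : Ω → ℝ := fun ω => ((m ω + v ω)^2)⁻¹ with hB
  set W : Ω → ℝ := fun ω => (Y ω + v ω)^2 with hW
  set f : Ω → ℝ := fun ω => B ω * W ω with hf
  have hBsm : StronglyMeasurable[ℱ 0] B :=
    (((hmsm.measurable.add hvsm.measurable).pow_const 2).inv).stronglyMeasurable
  have hv0 : ∀ᵐ ω ∂μ, 0 ≤ v ω := by
    filter_upwards [hσ2nn] with ω h
    exact div_nonneg h (hm0 ω).le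
  have hvbd : ∀ᵐ ω ∂μ, v ω ≤ K/(3*c) := by
    filter_upwards [hσ2bd, hσ2nn] with ω h1 h2
    rw [hv]; dsimp only
    rw [div_le_div_iff₀ (hm0 ω) (by positivity)]
    have h3 : 3*K*c ≤ m ω := by
      have : 0 ≤ 2 * Real.sqrt (σ2 ω) * Real.sqrt c := by positivity
      rw [hm]; dsimp only; linarith
    calc σ2 ω * (3*c) ≤ K^2 * (3*c) := by nlinarith
    _ = K * (3*K*c) := by ring
    _ ≤ K * m ω := by nlinarith
  have hfnn : ∀ ω, 0 ≤ f ω := fun ω => mul_nonneg (by positivity) (sq_nonneg _)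
  have hfbd : ∀ᵐ ω ∂μ, |f ω| ≤ ((3*K*c)^2)⁻¹ * (K + K/(3*c))^2 := by
    filter_upwards [hv0, hvbd, hbd1] with ω h1 h2 h3
    have h4 : 3*K*c ≤ m ω := by
      have : 0 ≤ 2 * Real.sqrt (σ2 ω) * Real.sqrt c := by positivity
      rw [hm]; dsimp only; linarith
    have hmv : 3*K*c ≤ m ω + v ω := by linarith
    have hB1 : B ω ≤ ((3*K*c)^2)⁻¹ := by
      rw [hB]; dsimp only
      apply inv_anti₀ (by positivity)
      have h5 : 0 < 3*K*c := by positivity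
      nlinarith
    have hW1 : W ω ≤ (K + K/(3*c))^2 := by
      rw [hW]; dsimp only
      rw [← sq_abs]
      apply pow_le_pow_left₀ (abs_nonneg _)
      calc |Y ω + v ω| ≤ |Y ω| + |v ω| := abs_add_le _ _
      _ ≤ K + K/(3*c) := by
          rw [abs_of_nonneg h1]; exact add_le_add h3 h2
    rw [abs_of_nonneg (hfnn ω)]
    exact mul_le_mul hB1 hW1 (sq_nonneg _) (by positivity)
  have hfsm : StronglyMeasurable f := (hBsm.mono (ℱ.le 0)).mul ((hsm.add (hvsm.mono (ℱ.le 0))).pow 2)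
  have hfint : Integrable f μ := bdd_int' _ _ hfsm.aestronglyMeasurable hfbd
  -- conditional expectation of f
  have hWint : Integrable W μ := by
    refine bdd_int' _ ((K + K/(3*c))^2) ((hsm.add (hvsm.mono (ℱ.le 0))).pow 2).aestronglyMeasurable ?_
    filter_upwards [hv0, hvbd, hbd1] with ω h1 h2 h3
    rw [hW, abs_pow]
    apply pow_le_pow_left₀ (abs_nonneg _)
    calc |Y ω + v ω| ≤ |Y ω| + |v ω| := abs_add_le _ _
    _ ≤ K + K/(3*c) := by rw [abs_of_nonneg h1]; exact add_le_add h3 h2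
  have hcondW : μ[W|ℱ 0] =ᵐ[μ] fun ω => σ2 ω + (v ω)^2 := by
    set g2 : Ω → ℝ := fun ω => 2 * v ω * Y ω with hg2
    set g3 : Ω → ℝ := fun ω => (v ω)^2 with hg3
    have hWsplit : W = Y^2 + (g2 + g3) := by
      funext ω; simp only [Pi.add_apply, hY2, hg2, hg3, hW]; ring
    have hg2int : Integrable g2 μ := by
      refine bdd_int' _ (2*(K/(3*c))*K) ?_ ?_
      · exact (((hvsm.mono (ℱ.le 0)).const_mul 2).mul hsm).aestronglyMeasurable
      · filter_upwards [hv0, hvbd, hbd1] with ω h1 h2 h3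
        rw [hg2]; dsimp only
        rw [abs_mul, abs_mul, abs_two, abs_of_nonneg h1]
        have : 0 ≤ v ω * |Y ω| := mul_nonneg h1 (abs_nonneg _)
        have hKc : (0:ℝ) ≤ K/(3*c) := by positivity
        nlinarith [abs_nonneg (Y ω)]
    have hg3int : Integrable g3 μ := by
      refine bdd_int' _ ((K/(3*c))^2) (((hvsm.mono (ℱ.le 0)).pow 2).aestronglyMeasurable) ?_
      filter_upwards [hv0, hvbd] with ω h1 h2
      rw [hg3, abs_pow]
      apply pow_le_pow_left₀ (abs_nonneg _)
      rwa [abs_of_nonneg h1]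
    have e1 : μ[W|ℱ 0] =ᵐ[μ] μ[Y^2|ℱ 0] + μ[g2 + g3|ℱ 0] := by
      rw [hWsplit]; exact condExp_add hY2int (hg2int.add hg3int) _
    have e2 : μ[g2 + g3|ℱ 0] =ᵐ[μ] μ[g2|ℱ 0] + μ[g3|ℱ 0] := condExp_add hg2int hg3int _
    have e3 : μ[g2|ℱ 0] =ᵐ[μ] (fun ω => 2 * v ω) * μ[Y|ℱ 0] := by
      have : g2 = (fun ω => 2 * v ω) * Y := by funext ω; simp [hg2]
      rw [this]
      exact condExp_mul_of_stronglyMeasurable_left (hvsm.const_mul 2) (by rwa [← this]) hintY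
    have e4 : μ[g3|ℱ 0] = g3 := condExp_of_stronglyMeasurable (ℱ.le 0) (hvsm.pow 2) hg3int
    filter_upwards [e1, e2, e3, hmd1] with ω h1 h2 h3 h4
    rw [h1]
    simp only [Pi.add_apply]
    rw [h2]
    simp only [Pi.add_apply, h3, e4, Pi.mul_apply, h4]
    simp [hg3, hσ2]
  have hcondf : μ[f|ℱ 0] =ᵐ[μ] fun ω => B ω * (σ2 ω + (v ω)^2) := by
    have h1 : μ[f|ℱ 0] =ᵐ[μ] B * μ[W|ℱ 0] := by
      have : f = B * W := rfl
      rw [this]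
      exact condExp_mul_of_stronglyMeasurable_left hBsm (by rwa [← this]) hWint
    filter_upwards [h1, hcondW] with ω h2 h3
    rw [h2, Pi.mul_apply, h3]
  have hptbd : μ[f|ℱ 0] ≤ᵐ[μ] fun _ => 1/(1+4*c) := by
    filter_upwards [hcondf, hσ2nn] with ω h1 h2
    rw [h1]
    have hm2 : 4 * σ2 ω * c ≤ (m ω)^2 := by
      have hs : Real.sqrt (σ2 ω)^2 = σ2 ω := Real.sq_sqrt h2
      have hsc : Real.sqrt c^2 = c := Real.sq_sqrt hc.le
      have h5 : 0 ≤ 2 * Real.sqrt (σ2 ω) * Real.sqrt c := by positivity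
      have h6 : (0:ℝ) < 3*K*c := by positivity
      rw [hm]; dsimp only
      nlinarith
    exact cantelli_arith h2 (hm0 ω) hm2 hc
  have hintf : ∫ ω, f ω ∂μ ≤ 1/(1+4*c) := by
    rw [← integral_condExp (ℱ.le 0) (m := ℱ 0)]
    calc ∫ ω, (μ[f|ℱ 0]) ω ∂μ ≤ ∫ _ω, 1/(1+4*c) ∂μ :=
      integral_mono_ae integrable_condExp (integrable_const _) hptbd
    _ = 1/(1+4*c) := by simp
  have hexp : 1/(1+4*c) ≤ Real.exp (-c) := by
    have h1 : Real.exp c ≤ 1+4*c := by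
      have h := Real.exp_bound (x := c) (by rw [abs_of_pos hc]; exact hc1) (n := 2) (by norm_num)
      have h2 : ∑ i ∈ Finset.range 2, c ^ i / (i.factorial : ℝ) = 1 + c := by
        norm_num [Finset.sum_range_succ, Nat.factorial]
      rw [h2] at h
      have h3 := (abs_le.1 h).2
      have h4 : |c|^2 * ((2:ℕ).succ / ((2:ℕ).factorial * (2:ℕ)) : ℝ) = c^2 * (3/4) := by
        rw [sq_abs]; norm_num [Nat.factorial]
      rw [h4] at h3
      nlinarith
    rw [Real.exp_neg, one_div]
    exact inv_anti₀ (Real.exp_pos c) h1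
  have hincl : ∀ᵐ ω ∂μ, ω ∈ {ω | 2 * Real.sqrt (σ2 ω) * Real.sqrt c + 3*K*c < Y ω} →
      ω ∈ {ω | 1 ≤ f ω} := by
    filter_upwards [hv0] with ω h1 h2
    have hmω : m ω < Y ω := h2
    have hmv : 0 < m ω + v ω := by linarith [hm0 ω]
    have hYv : m ω + v ω < Y ω + v ω := by linarith
    have hsq : (m ω + v ω)^2 ≤ (Y ω + v ω)^2 := by nlinarith
    show 1 ≤ f ω
    rw [hf]; dsimp only
    rw [hB]; dsimp only
    rw [inv_mul_eq_div, le_div_iff₀ (by positivity)]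
    rw [hW]; dsimp only
    linarith
  have hmark := mul_meas_ge_le_integral_of_nonneg
    (Filter.Eventually.of_forall hfnn) hfint 1
  rw [one_mul] at hmark
  calc μ {ω | 2 * Real.sqrt (σ2 ω) * Real.sqrt c + 3*K*c < Y ω}
      ≤ μ {ω | 1 ≤ f ω} := measure_mono_ae hincl
  _ = ENNReal.ofReal ((μ {ω | 1 ≤ f ω}).toReal) := (ENNReal.ofReal_toReal (measure_ne_top μ _)).symm
  _ ≤ ENNReal.ofReal (Real.exp (-c)) := by
      apply ENNReal.ofReal_le_ofReal
      calc (μ {ω | 1 ≤ f ω}).toReal ≤ ∫ ω, f ω ∂μ := hmark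
      _ ≤ 1/(1+4*c) := hintf
      _ ≤ Real.exp (-c) := hexp

end S2
section S3

lemma find_level (a S : ℝ) : ∀ m : ℕ, S ≤ a → a/2^m < S →
    ∃ j, 1 ≤ j ∧ j ≤ m ∧ a/2^j < S ∧ S ≤ a/2^(j-1) := by
  intro m
  induction m with
  | zero => intro h1 h2; simp at h2; linarith
  | succ n ih =>
      intro h1 h2
      by_cases h : a/2^n < S
      · obtain ⟨j, hj1, hj2, hj3, hj4⟩ := ih h1 h
        exact ⟨j, hj1, hj2.trans (Nat.le_succ n), hj3, hj4⟩
      · push_neg at h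
        exact ⟨n+1, Nat.le_add_left 1 n, le_refl _, h2, by simpa using h⟩

lemma log2_facts {T : ℕ} (hT : 1 ≤ T) :
    ((Nat.log 2 T : ℝ) + 1) ≤ Real.logb 2 (2*T) ∧ (T:ℝ) < 2^(Nat.log 2 T + 1) ∧ (2:ℝ)^(Nat.log 2 T) ≤ T := by
  set m := Nat.log 2 T with hm
  have h1 : 2^m ≤ T := Nat.pow_log_le_self 2 (by omega)
  have h2 : T < 2^(m+1) := Nat.lt_pow_succ_log_self (by norm_num) T
  have h1' : (2:ℝ)^m ≤ T := by exact_mod_cast h1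
  have h2' : (T:ℝ) < 2^(m+1) := by exact_mod_cast h2
  refine ⟨?_, h2', h1'⟩
  have h3 : (2:ℝ)^(m+1) ≤ 2*T := by
    rw [pow_succ]
    nlinarith
  have h4 : Real.logb 2 ((2:ℝ)^(m+1)) ≤ Real.logb 2 (2*T) :=
    Real.logb_le_logb_of_le (by norm_num) (by positivity) h3
  rw [Real.logb_pow, Real.logb_self_eq_one (by norm_num), mul_one] at h4
  push_cast at h4
  linarith

end S3

set_option maxHeartbeats 1600000 in
/-- a version of the Bernstein–Freedman inequality. -/
theorem bernstein_freedman
    {Ω : Type*} {m0 : MeasurableSpace Ω} {μ : Measure Ω}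
    [IsProbabilityMeasure μ]
    (ℱ : Filtration ℕ m0)
    (X : ℕ → Ω → ℝ) {K : ℝ} (hK : 0 < K)
    (hadapted : ∀ s, 1 ≤ s → StronglyMeasurable[ℱ s] (X s))
    (hint : ∀ s, 1 ≤ s → Integrable (X s) μ)
    (hmd : ∀ s, 1 ≤ s → μ[X s|ℱ (s - 1)] =ᵐ[μ] 0)
    (hbd : ∀ s, 1 ≤ s → ∀ᵐ ω ∂μ, |X s ω| ≤ K)
    (Ssq : ℕ → Ω → ℝ)
    (hSsq : ∀ t ω, Ssq t ω = ∑ τ ∈ Finset.Icc 1 t, (μ[(X τ) ^ 2|ℱ (τ - 1)]) ω)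
    {δ : ℝ} (hδ0 : 0 < δ) (hδ1 : δ < 1) (T : ℕ) (hT : 1 ≤ T) :
    ENNReal.ofReal (1 - δ) ≤
      μ {ω | ∀ t, 1 ≤ t → t ≤ T →
          ∑ τ ∈ Finset.Icc 1 t, X τ ω
            ≤ 2 * Real.sqrt (Ssq T ω)
                * Real.sqrt (Real.log (Real.logb 2 (2 * T) / δ))
              + 3 * K * Real.log (Real.logb 2 (2 * T) / δ)} := by
  classical
  set L : ℝ := Real.logb 2 (2 * T) with hLdef
  set c : ℝ := Real.log (L / δ) with hcdef
  obtain ⟨hmL, hTltpow, hpowleT⟩ := log2_facts hT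
  rw [← hLdef] at hmL
  clear_value L c
  have hT1 : (1:ℝ) ≤ T := by exact_mod_cast hT
  have hL1 : (1:ℝ) ≤ L := by
    have h0 : (0:ℝ) ≤ (Nat.log 2 T : ℝ) := Nat.cast_nonneg _
    linarith
  have hLδpos : 0 < L/δ := by positivity
  have hLδ : 1 < L/δ := by rw [lt_div_iff₀ hδ0]; nlinarith
  have hc0 : 0 < c := by rw [hcdef]; exact Real.log_pos hLδ
  have hec : Real.exp c = L/δ := by rw [hcdef]; exact Real.exp_log hLδpos
  have heneg : Real.exp (-c) = δ/L := by rw [Real.exp_neg, hec, inv_div]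
  set Bad : Set Ω := {ω | ∃ t, 1 ≤ t ∧ t ≤ T ∧
      2 * Real.sqrt (Ssq T ω) * Real.sqrt c + 3 * K * c
        < ∑ τ ∈ Finset.Icc 1 t, X τ ω} with hBad
  have hδLδ : δ / L ≤ δ := div_le_self hδ0.le hL1
  suffices hB : μ Bad ≤ ENNReal.ofReal δ by
    have hcompl : {ω | ∀ t, 1 ≤ t → t ≤ T →
        ∑ τ ∈ Finset.Icc 1 t, X τ ω
          ≤ 2 * Real.sqrt (Ssq T ω) * Real.sqrt c + 3 * K * c} = Badᶜ := by
      ext ω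
      simp only [hBad, Set.mem_compl_iff, Set.mem_setOf_eq, not_exists, not_and, not_lt]
    rw [hcompl]
    have h1 : (1:ℝ≥0∞) ≤ μ Badᶜ + μ Bad := by
      have h2 : μ (Badᶜ ∪ Bad) ≤ μ Badᶜ + μ Bad := measure_union_le _ _
      rwa [Set.compl_union_self, measure_univ] at h2
    have h3 : ENNReal.ofReal (1 - δ) + ENNReal.ofReal δ ≤ μ Badᶜ + ENNReal.ofReal δ := by
      rw [← ENNReal.ofReal_add (by linarith) hδ0.le]
      norm_num
      exact le_trans h1 (add_le_add_right hB _)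
    exact (ENNReal.add_le_add_iff_right ENNReal.ofReal_ne_top).1 h3
  by_cases hc14 : c < 1/4
  · -- small c: T = 1, Cantelli
    have hlog2 : c < Real.log 2 := lt_of_lt_of_le hc14 (by nlinarith [Real.log_two_gt_d9])
    have hL2 : L < 2 := by
      have h1 : L ≤ L/δ := by rw [le_div_iff₀ hδ0]; nlinarith
      have h2 : L/δ < 2 := by
        rw [← hec, ← Real.exp_log (show (0:ℝ) < 2 by norm_num)]
        exact Real.exp_lt_exp.2 hlog2
      linarith
    have hT4 : (2*(T:ℝ)) < 4 := by
      have hL2' : Real.logb 2 (2*(T:ℝ)) < 2 := by rw [← hLdef]; exact hL2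
      have h5 := (Real.logb_lt_iff_lt_rpow (by norm_num) (by positivity)).1 hL2'
      have h6 : (2:ℝ) ^ (2:ℝ) = 4 := by
        rw [show (2:ℝ) = ((2:ℕ):ℝ) by norm_num, Real.rpow_natCast]
        norm_num
      rwa [h6] at h5
    have hT1' : T = 1 := by
      have : (T:ℝ) < 2 := by linarith
      have : T < 2 := by exact_mod_cast this
      omega
    subst hT1'
    have hBadeq : Bad = {ω | 2 * Real.sqrt ((μ[(X 1) ^ 2|ℱ 0]) ω) * Real.sqrt c
        + 3*K*c < X 1 ω} := by
      ext ω
      simp only [hBad, Set.mem_setOf_eq]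
      have hS1 : Ssq 1 ω = (μ[(X 1) ^ 2|ℱ 0]) ω := by
        rw [hSsq 1 ω, Finset.Icc_self, Finset.sum_singleton]
      constructor
      · rintro ⟨t, h1, h2, h3⟩
        have ht : t = 1 := le_antisymm h2 h1
        subst ht
        rw [Finset.Icc_self, Finset.sum_singleton] at h3
        rwa [hS1] at h3
      · intro h
        refine ⟨1, le_refl 1, le_refl 1, ?_⟩
        rw [Finset.Icc_self, Finset.sum_singleton, hS1]
        exact h
    rw [hBadeq]
    calc μ {ω | 2 * Real.sqrt ((μ[(X 1) ^ 2|ℱ 0]) ω) * Real.sqrt c + 3*K*c < X 1 ω}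
        ≤ ENNReal.ofReal (Real.exp (-c)) :=
          cantelli ℱ (X 1) hK ((hadapted 1 le_rfl).mono (ℱ.le 1)) (hint 1 le_rfl)
            (hmd 1 le_rfl) (hbd 1 le_rfl) hc0 (by linarith)
    _ ≤ ENNReal.ofReal δ := by
        rw [heneg]
        exact ENNReal.ofReal_le_ofReal hδLδ
  · -- main branch
    push_neg at hc14
    set m := Nat.log 2 T with hm
    clear_value m
    set a : ℝ := K^2 * T with ha
    have ha0 : 0 < a := by rw [ha]; positivity
    clear_value a
    set lam : ℕ → ℝ := fun j =>
      if j = 0 ∨ a/2^(j-1) ≤ 8*c*K^2 then 1/K else Real.sqrt (2*c/(a/2^(j-1))) with hlam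
    set gg : ℕ → ℝ := fun j => (lam j)^2/2 + (2/9)*(lam j)^3*K with hgg
    have hlam0 : ∀ j, 0 ≤ lam j := by
      intro j
      rw [hlam]
      dsimp only
      split
      · positivity
      · exact Real.sqrt_nonneg _
    have hgg0 : ∀ j, 0 ≤ gg j := by
      intro j
      have := hlam0 j
      rw [hgg]
      dsimp only
      positivity
    have hlamK : ∀ j, lam j * K ≤ 1 := by
      intro j
      rw [hlam]
      dsimp only
      split
      · rw [one_div, inv_mul_cancel₀ (ne_of_gt hK)]
      · rename_i hcond
        push_neg at hcond
        have hb8 : 8*c*K^2 < a/2^(j-1) := hcond.2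
        have hble : 2*c/(a/2^(j-1)) ≤ 1/K^2 := by
          rw [div_le_div_iff₀ (by positivity) (by positivity)]
          nlinarith
        calc Real.sqrt (2*c/(a/2^(j-1))) * K ≤ Real.sqrt (1/K^2) * K := by
              have := Real.sqrt_le_sqrt hble
              nlinarith [Real.sqrt_nonneg (2*c/(a/2^(j-1)))]
        _ = 1 := by
              rw [show (1:ℝ)/K^2 = (1/K)^2 by ring, Real.sqrt_sq (by positivity)]
              field_simp
    set Badj : ℕ → Set Ω := fun j => {ω | ∃ t, 1 ≤ t ∧ t ≤ T ∧
        c ≤ lam j * (∑ τ ∈ Finset.Icc 1 t, X τ ω)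
            - gg j * (∑ τ ∈ Finset.Icc 1 t, (μ[(X τ) ^ 2|ℱ (τ - 1)]) ω)} with hBadj
    have hville : ∀ j, μ (Badj j) ≤ ENNReal.ofReal (Real.exp (-c)) := fun j =>
      ville ℱ X hK hadapted hint hmd hbd (lam j) (gg j) (hlam0 j) (hlamK j) rfl c T
    have hG : ∀ᵐ ω ∂μ, ∀ τ, τ ∈ Finset.Icc 1 T →
        0 ≤ (μ[(X τ) ^ 2|ℱ (τ - 1)]) ω ∧ (μ[(X τ) ^ 2|ℱ (τ - 1)]) ω ≤ K^2 := by
      rw [ae_all_iff]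
      intro τ
      by_cases hτ : τ ∈ Finset.Icc 1 T
      · have hτ1 : 1 ≤ τ := (Finset.mem_Icc.1 hτ).1
        have h1 : 0 ≤ᵐ[μ] μ[(X τ) ^ 2|ℱ (τ - 1)] :=
          condExp_nonneg (Filter.Eventually.of_forall fun ω => sq_nonneg (X τ ω))
        have hXi : Integrable ((X τ) ^ 2) μ := by
          refine bdd_int _ (K^2)
            ((((hadapted τ hτ1).mono (ℱ.le τ)).pow 2).aestronglyMeasurable) ?_
          filter_upwards [hbd τ hτ1] with ω h
          show |X τ ω ^ 2| ≤ K^2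
          rw [abs_pow]
          exact pow_le_pow_left₀ (abs_nonneg _) h 2
        have h2 : μ[(X τ) ^ 2|ℱ (τ - 1)] ≤ᵐ[μ] fun _ => K^2 := by
          have h3 : (X τ) ^ 2 ≤ᵐ[μ] fun _ => K^2 := by
            filter_upwards [hbd τ hτ1] with ω h
            show X τ ω ^ 2 ≤ K^2
            rw [← sq_abs]
            exact pow_le_pow_left₀ (abs_nonneg _) h 2
          have h4 := condExp_mono (m := ℱ (τ-1)) hXi (integrable_const _) h3
          rwa [condExp_const (ℱ.le (τ-1))] at h4
        filter_upwards [h1, h2] with ω u v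
        exact fun _ => ⟨u, v⟩
      · exact Filter.Eventually.of_forall fun ω h => absurd h hτ
    have hcov : ∀ᵐ ω ∂μ, ω ∈ Bad → ω ∈ ⋃ j ∈ Finset.range (m+1), Badj j := by
      filter_upwards [hG] with ω hGω hω
      obtain ⟨t, ht1, htT, hthr⟩ := hω
      have hSV : Ssq T ω = ∑ τ ∈ Finset.Icc 1 T, (μ[(X τ) ^ 2|ℱ (τ - 1)]) ω := hSsq T ω
      set S := Ssq T ω with hSdef
      clear_value S
      have hS0 : 0 ≤ S := by
        rw [hSV]
        exact Finset.sum_nonneg fun τ hτ => (hGω τ hτ).1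
      have hSa : S ≤ a := by
        rw [hSV, ha]
        calc ∑ τ ∈ Finset.Icc 1 T, (μ[(X τ) ^ 2|ℱ (τ - 1)]) ω
            ≤ ∑ _τ ∈ Finset.Icc 1 T, K^2 := Finset.sum_le_sum fun τ hτ => (hGω τ hτ).2
        _ = ((Finset.Icc 1 T).card : ℝ) * K^2 := by rw [Finset.sum_const, nsmul_eq_mul]
        _ ≤ K^2 * T := by
            have hcard : (Finset.Icc 1 T).card = T := by simp [Nat.card_Icc]
            rw [hcard, mul_comm]
      set Mt := ∑ τ ∈ Finset.Icc 1 t, X τ ω with hMt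
      clear_value Mt
      set Vt := ∑ τ ∈ Finset.Icc 1 t, (μ[(X τ) ^ 2|ℱ (τ - 1)]) ω with hVtd
      clear_value Vt
      have hVt : Vt ≤ S := by
        rw [hSV, hVtd]
        apply Finset.sum_le_sum_of_subset_of_nonneg (Finset.Icc_subset_Icc le_rfl htT)
        exact fun τ hτ _ => (hGω τ hτ).1
      have hsqrt : 2 * Real.sqrt S * Real.sqrt c = 2 * Real.sqrt (S*c) := by
        rw [mul_assoc, ← Real.sqrt_mul hS0]
      have hthr' : 2*Real.sqrt (S*c) + 3*K*c < Mt := by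
        rw [← hsqrt]; exact hthr
      have hmem : ∀ j, j < m+1 → c ≤ lam j * Mt - gg j * Vt →
          ω ∈ ⋃ i ∈ Finset.range (m+1), Badj i := by
        intro j hj hcj
        rw [hMt, hVtd] at hcj
        exact Set.mem_biUnion (Finset.mem_range.2 hj) ⟨t, ht1, htT, hcj⟩
      by_cases hbot : S ≤ a/2^m
      · apply hmem 0 (Nat.succ_pos m)
        have hl0 : lam 0 = 1/K := by rw [hlam]; simp
        have hg0 : gg 0 = (13/18)/K^2 := by
          rw [hgg]; dsimp only; rw [hl0]; field_simp; ring
        have hS8 : S ≤ 8*c*K^2 := by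
          have h7 : a/2^m < 2*K^2 := by
            rw [div_lt_iff₀ (by positivity), ha]
            have h8 : (T:ℝ) < 2^(m+1) := hTltpow
            rw [pow_succ] at h8
            nlinarith
          nlinarith
        have hlb := level_bottom hc0 hK hS0 hS8
        rw [hl0, hg0]
        have e1 : (1/K)*(2*Real.sqrt (S*c) + 3*K*c) ≤ (1/K)*Mt :=
          mul_le_mul_of_nonneg_left hthr'.le (by positivity)
        have e2 : ((13/18)/K^2)*Vt ≤ ((13/18)/K^2)*S :=
          mul_le_mul_of_nonneg_left hVt (by positivity)
        linarith
      · push_neg at hbot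
        obtain ⟨j, hj1, hjm, hjlt, hjle⟩ := find_level a S m hSa hbot
        apply hmem j (by omega)
        have hb0 : (0:ℝ) < a/2^(j-1) := by positivity
        have hb2S : a/2^(j-1) ≤ 2*S := by
          have hpow : (2:ℝ)^j = 2^(j-1)*2 := by
            rw [← pow_succ]
            congr 1
            omega
          have hjj : a/2^(j-1) = 2*(a/2^j) := by
            rw [hpow]
            field_simp
          rw [hjj]
          linarith [hjlt]
        by_cases hbb : a/2^(j-1) ≤ 8*c*K^2
        · have hlj : lam j = 1/K := by
            rw [hlam]; dsimp only; rw [if_pos (Or.inr hbb)]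
          have hgj : gg j = (13/18)/K^2 := by
            rw [hgg]; dsimp only; rw [hlj]; field_simp; ring
          have hS8 : S ≤ 8*c*K^2 := le_trans hjle hbb
          have hlb := level_bottom hc0 hK hS0 hS8
          rw [hlj, hgj]
          have e1 : (1/K)*(2*Real.sqrt (S*c) + 3*K*c) ≤ (1/K)*Mt :=
            mul_le_mul_of_nonneg_left hthr'.le (by positivity)
          have e2 : ((13/18)/K^2)*Vt ≤ ((13/18)/K^2)*S :=
            mul_le_mul_of_nonneg_left hVt (by positivity)
          linarith
        · have hlj : lam j = Real.sqrt (2*c/(a/2^(j-1))) := by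
            rw [hlam]; dsimp only
            rw [if_neg (not_or.2 ⟨by omega, hbb⟩)]
          have hggj : gg j = (Real.sqrt (2*c/(a/2^(j-1))))^2/2
              + (2/9)*(Real.sqrt (2*c/(a/2^(j-1))))^3*K := by
            rw [hgg]; dsimp only; rw [hlj]
          have hbc : 2*c*K^2 ≤ a/2^(j-1) := by nlinarith [not_le.1 hbb]
          have hlm := level_mid hc0 hK hb0 hbc hb2S hjle
          have e1 : lam j * (2*Real.sqrt (S*c) + 3*K*c) ≤ lam j * Mt :=
            mul_le_mul_of_nonneg_left hthr'.le (hlam0 j)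
          have e2 : gg j * Vt ≤ gg j * (a/2^(j-1)) :=
            mul_le_mul_of_nonneg_left (le_trans hVt hjle) (hgg0 j)
          rw [hlj] at e1
          rw [hggj] at e2
          rw [hlj, hggj]
          linarith
    calc μ Bad ≤ μ (⋃ j ∈ Finset.range (m+1), Badj j) := measure_mono_ae hcov
    _ ≤ ∑ j ∈ Finset.range (m+1), μ (Badj j) := measure_biUnion_finset_le _ _
    _ ≤ ∑ _j ∈ Finset.range (m+1), ENNReal.ofReal (Real.exp (-c)) :=
        Finset.sum_le_sum fun j _ => hville j
    _ = ((m+1:ℕ):ℝ≥0∞) * ENNReal.ofReal (Real.exp (-c)) := by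
        rw [Finset.sum_const, Finset.card_range, nsmul_eq_mul]
    _ ≤ ENNReal.ofReal δ := by
        rw [heneg, show ((m+1:ℕ):ℝ≥0∞) = ENNReal.ofReal ((m+1:ℕ):ℝ) from
          (ENNReal.ofReal_natCast _).symm, ← ENNReal.ofReal_mul (by positivity)]
        apply ENNReal.ofReal_le_ofReal
        have hcast : ((m+1:ℕ):ℝ) ≤ L := by
          push_cast
          exact hmL
        calc ((m+1:ℕ):ℝ) * (δ/L) ≤ L * (δ/L) :=
            mul_le_mul_of_nonneg_right hcast (by positivity)
        _ = δ := by field_simp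
end

section
/- Let (a_t)_{t≥1} be a non-negative real sequence and S_t = Σ_{τ=1}^t a_τ. Then for every integer T ≥ 1: (i) Σ_{t=1}^T a_t / √( (S_t + 1)·log(e·(1 + S_t)) ) ≤ 2·√(S_T), and (ii) Σ_{t=1}^T a_t / ( (S_t + 1)·log(e·(1 + S_t)) ) ≤ log( log( e·(1 + S_T) ) ). -/
private lemma logC {x y : ℝ} (hx : 0 < x) (hxy : x ≤ y) :
    (y - x) / y ≤ Real.log y - Real.log x := by
  have hy : 0 < y := lt_of_lt_of_le hx hxy
  have h := Real.log_le_sub_one_of_pos (show (0:ℝ) < x / y from div_pos hx hy)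
  rw [Real.log_div hx.ne' hy.ne'] at h
  have h2 : x / y - 1 = -((y - x) / y) := by field_simp; ring
  linarith [h2 ▸ h]

private lemma hlogE {y : ℝ} (hy : 0 ≤ y) :
    Real.log (Real.exp 1 * (1 + y)) = 1 + Real.log (1 + y) := by
  rw [Real.log_mul (Real.exp_ne_zero 1) (by linarith), Real.log_exp]

private lemma stepA {x y : ℝ} (hx : 0 ≤ x) (hxy : x ≤ y) :
    (y - x) / Real.sqrt ((y + 1) * Real.log (Real.exp 1 * (1 + y)))
      ≤ 2 * Real.sqrt y - 2 * Real.sqrt x := by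
  have hy : 0 ≤ y := le_trans hx hxy
  have hl0 : 0 ≤ Real.log (1 + y) := Real.log_nonneg (by linarith)
  have hD : y ≤ (y + 1) * Real.log (Real.exp 1 * (1 + y)) := by
    rw [hlogE hy]; nlinarith
  rcases eq_or_lt_of_le hy with h0 | hy'
  · have hx0 : x = 0 := le_antisymm (hxy.trans h0.symm.le) hx
    simp [← h0, hx0]
  · have hsy : 0 < Real.sqrt y := Real.sqrt_pos.mpr hy'
    have h1 : (y - x) / Real.sqrt ((y + 1) * Real.log (Real.exp 1 * (1 + y)))
        ≤ (y - x) / Real.sqrt y := by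
      have : Real.sqrt y ≤ Real.sqrt ((y + 1) * Real.log (Real.exp 1 * (1 + y))) :=
        Real.sqrt_le_sqrt hD
      gcongr <;> linarith
    have h2 : (y - x) / Real.sqrt y ≤ 2 * Real.sqrt y - 2 * Real.sqrt x := by
      rw [div_le_iff₀ hsy]
      nlinarith [Real.sq_sqrt hy, Real.sq_sqrt hx, Real.sqrt_nonneg x,
        Real.sqrt_nonneg y, sq_nonneg (Real.sqrt y - Real.sqrt x)]
    linarith

private lemma stepB {x y : ℝ} (hx : 0 ≤ x) (hxy : x ≤ y) :
    (y - x) / ((y + 1) * Real.log (Real.exp 1 * (1 + y)))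
      ≤ Real.log (1 + Real.log (1 + y)) - Real.log (1 + Real.log (1 + x)) := by
  have hy : 0 ≤ y := le_trans hx hxy
  set u := Real.log (1 + y) with hu
  set v := Real.log (1 + x) with hv
  have hv0 : 0 ≤ v := Real.log_nonneg (by linarith)
  have hvu : v ≤ u := Real.log_le_log (by linarith) (by linarith)
  have hC1 : (u - v) / (1 + u) ≤ Real.log (1 + u) - Real.log (1 + v) := by
    have := logC (x := 1 + v) (y := 1 + u) (by linarith) (by linarith)
    have e : (1 + u) - (1 + v) = u - v := by ring
    rwa [e] at this
  have hC2 : (y - x) / (1 + y) ≤ u - v := by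
    have := logC (x := 1 + x) (y := 1 + y) (by linarith) (by linarith)
    have e : (1 + y) - (1 + x) = y - x := by ring
    rwa [e] at this
  have hu1 : (0:ℝ) < 1 + u := by linarith
  rw [hlogE hy]
  have e2 : (y - x) / ((y + 1) * (1 + u)) = ((y - x) / (y + 1)) / (1 + u) := by
    rw [div_div]
  rw [e2]
  calc ((y - x) / (y + 1)) / (1 + u) ≤ (u - v) / (1 + u) := by
        gcongr
        have : (y - x) / (y + 1) = (y - x) / (1 + y) := by ring_nf
        linarith [hC2, this ▸ le_refl ((y - x) / (y + 1))]
    _ ≤ Real.log (1 + u) - Real.log (1 + v) := hC1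

private lemma tel (g h : ℕ → ℝ) (T : ℕ)
    (hh : ∀ t, 1 ≤ t → t ≤ T → h t ≤ g t - g (t - 1)) :
    ∑ t ∈ Finset.Icc 1 T, h t ≤ g T - g 0 := by
  induction T with
  | zero => simp
  | succ n ih =>
    rw [Finset.sum_Icc_succ_top (Nat.one_le_iff_ne_zero.mpr (Nat.succ_ne_zero n))]
    have h1 := ih (fun t h1 h2 => hh t h1 (h2.trans (Nat.le_succ n)))
    have h2 := hh (n + 1) (Nat.le_add_left 1 n) le_rfl
    simp only [Nat.add_sub_cancel] at h2
    linarith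

/-- two summation bounds with the `H`-type normalization. -/
theorem sum_bounds_H (a : ℕ → ℝ) (ha : ∀ t, 0 ≤ a t)
    (S : ℕ → ℝ) (hS : ∀ t, S t = ∑ τ ∈ Finset.Icc 1 t, a τ)
    (T : ℕ) (hT : 1 ≤ T) :
    (∑ t ∈ Finset.Icc 1 T,
        a t / Real.sqrt ((S t + 1) * Real.log (Real.exp 1 * (1 + S t)))
      ≤ 2 * Real.sqrt (S T)) ∧
    (∑ t ∈ Finset.Icc 1 T,
        a t / ((S t + 1) * Real.log (Real.exp 1 * (1 + S t)))
      ≤ Real.log (Real.log (Real.exp 1 * (1 + S T)))) := by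
  have hS0 : S 0 = 0 := by simp [hS]
  have hnn : ∀ t, 0 ≤ S t := fun t => by
    rw [hS]; exact Finset.sum_nonneg fun i _ => ha i
  have hstep : ∀ t, 1 ≤ t → S t = S (t - 1) + a t := by
    intro t ht
    obtain ⟨n, rfl⟩ := Nat.exists_eq_add_of_le ht
    simp only [Nat.add_sub_cancel, hS]
    rw [add_comm 1 n, Finset.sum_Icc_succ_top (Nat.one_le_iff_ne_zero.mpr (Nat.succ_ne_zero n))]
    simp [add_comm]
  have key : ∀ t, 1 ≤ t → a t = S t - S (t - 1) ∧ 0 ≤ S (t - 1) ∧ S (t - 1) ≤ S t := by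
    intro t ht
    have := hstep t ht
    exact ⟨by linarith, hnn _, by linarith [ha t]⟩
  constructor
  · have := tel (fun t => 2 * Real.sqrt (S t))
      (fun t => a t / Real.sqrt ((S t + 1) * Real.log (Real.exp 1 * (1 + S t)))) T
      (by
        intro t h1 _
        obtain ⟨e, hx, hxy⟩ := key t h1
        rw [e]
        exact stepA hx hxy)
    simpa [hS0] using this
  · have := tel (fun t => Real.log (1 + Real.log (1 + S t)))
      (fun t => a t / ((S t + 1) * Real.log (Real.exp 1 * (1 + S t)))) T
      (by
        intro t h1 _
        obtain ⟨e, hx, hxy⟩ := key t h1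
        rw [e]
        exact stepB hx hxy)
    simp only [hS0] at this
    rw [hlogE (hnn T)]
    simpa using this
end

section
/- Let (a_t)_{t≥1} be a non-negative real sequence, S_t = Σ_{τ=1}^t a_τ, and ε > 0. Then for every integer T ≥ 1: Σ_{t=1}^T a_t / (ε + S_t) ≤ log(1 + S_T/ε). -/
lemma key_log_lemma {x y : ℝ} (hy : 0 < y) (hxy : y ≤ x) :
    (x - y) / x ≤ Real.log x - Real.log y := by
  have hx : 0 < x := lt_of_lt_of_le hy hxy
  have h := Real.log_le_sub_one_of_pos (div_pos hy hx)
  rw [Real.log_div (ne_of_gt hy) (ne_of_gt hx)] at h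
  have : (x - y) / x = 1 - y / x := by field_simp
  linarith

/-- `∑ a_t / (ε + S_t) ≤ log (1 + S_T / ε)`. -/
theorem sum_div_eps_partial_sum (a : ℕ → ℝ) (ha : ∀ t, 0 ≤ a t)
    (S : ℕ → ℝ) (hS : ∀ t, S t = ∑ τ ∈ Finset.Icc 1 t, a τ)
    {ε : ℝ} (hε : 0 < ε)
    (T : ℕ) (hT : 1 ≤ T) :
    ∑ t ∈ Finset.Icc 1 T, a t / (ε + S t) ≤ Real.log (1 + S T / ε) := by
  have hSnn : ∀ t, 0 ≤ S t := by
    intro t; rw [hS t]; exact Finset.sum_nonneg fun i _ => ha i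
  have hstep : ∀ t, S (t + 1) = S t + a (t + 1) := by
    intro t
    rw [hS, hS, Finset.sum_Icc_succ_top (by omega)]
  have hlog : ∀ t, Real.log (1 + S t / ε) = Real.log (ε + S t) - Real.log ε := by
    intro t
    have h0 := hSnn t
    rw [← Real.log_div (by positivity) (ne_of_gt hε)]
    congr 1
    field_simp
  induction T, hT using Nat.le_induction with
  | base =>
    have hS1 : S 1 = a 1 := by rw [hS]; simp
    rw [Finset.Icc_self, Finset.sum_singleton, hlog]
    have := key_log_lemma hε (by linarith [ha 1, hS1 ▸ le_refl (S 1)] : ε ≤ ε + S 1)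
    calc a 1 / (ε + S 1) = ((ε + S 1) - ε) / (ε + S 1) := by rw [hS1]; ring_nf
      _ ≤ Real.log (ε + S 1) - Real.log ε :=
        key_log_lemma hε (by linarith [hSnn 1])
  | succ n hn ih =>
    rw [Finset.sum_Icc_succ_top (by omega)]
    have h1 : a (n + 1) / (ε + S (n + 1))
        ≤ Real.log (ε + S (n + 1)) - Real.log (ε + S n) := by
      have := key_log_lemma (x := ε + S (n + 1)) (y := ε + S n)
        (by linarith [hSnn n]) (by rw [hstep n]; linarith [ha (n + 1)])
      calc a (n + 1) / (ε + S (n + 1))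
          = ((ε + S (n + 1)) - (ε + S n)) / (ε + S (n + 1)) := by
            rw [hstep n]; ring_nf
        _ ≤ _ := this
    have ihn := ih
    rw [hlog] at *
    linarith
end
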